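/- Define h(a, y) = (2ay√(1-y²)/((a²+1)y² - 1))·(i + (a²y² - 1)/i) for an integer i ≥ 1, with 1/a < y < 1 and a > 1. Then ∂h/∂y - (a/(y(1-y²)))·∂h/∂a = -4a³y⁴/(i√(1-y²)·(y² + a²y² - 1)) < 0. -/

import Mathlib

set_option maxHeartbeats 1000000

/-- The hyperbolicity threshold of the pantographic orbit `Pan(i,a,h)` as a
function of the two variables `a` and `y`. -/
noncomputable def hthr (i : ℕ) (a y : ℝ) : ℝ :=
  (2 * a * y * Real.sqrt (1 - y ^ 2) / ((a ^ 2 + 1) * y ^ 2 - 1)) *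
    (i + (a ^ 2 * y ^ 2 - 1) / i)

theorem stmt_16 (i : ℕ) (hi : 1 ≤ i) (a y : ℝ) (ha : 1 < a)
    (hy₁ : 1 / a < y) (hy₂ : y < 1) (Ha Hy : ℝ)
    (hHa : HasDerivAt (fun b => hthr i b y) Ha a)
    (hHy : HasDerivAt (fun z => hthr i a z) Hy y) :
    Hy - (a / (y * (1 - y ^ 2))) * Ha =
      -4 * a ^ 3 * y ^ 4 /
        (i * Real.sqrt (1 - y ^ 2) * (y ^ 2 + a ^ 2 * y ^ 2 - 1)) ∧
    Hy - (a / (y * (1 - y ^ 2))) * Ha < 0 := by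
  have ha0 : (0:ℝ) < a := lt_trans one_pos ha
  have hy0 : 0 < y := lt_trans (by positivity) hy₁
  have hay : 1 < a * y := by
    have := (div_lt_iff₀ ha0).mp hy₁
    linarith [mul_comm y a]
  have ha2y2 : 1 < a ^ 2 * y ^ 2 := by nlinarith
  have h1y2 : 0 < 1 - y ^ 2 := by nlinarith
  set s : ℝ := Real.sqrt (1 - y ^ 2) with hs_def
  have hs0 : 0 < s := Real.sqrt_pos.mpr h1y2
  have hs2 : s ^ 2 = 1 - y ^ 2 := Real.sq_sqrt h1y2.le
  have hD : 0 < (a ^ 2 + 1) * y ^ 2 - 1 := by nlinarith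
  have hE : 0 < y ^ 2 + a ^ 2 * y ^ 2 - 1 := by nlinarith
  have hi0 : (0:ℝ) < (i:ℝ) := by exact_mod_cast hi
  -- derivative in a
  have hu : HasDerivAt (fun b : ℝ => 2 * b * y * s) (2 * 1 * y * s) a :=
    (((hasDerivAt_id' (x := a)).const_mul 2).mul_const y).mul_const s
  have hv : HasDerivAt (fun b : ℝ => (b ^ 2 + 1) * y ^ 2 - 1)
      ((2 * a ^ 1) * y ^ 2) a := by
    simpa using (((hasDerivAt_pow 2 a).add_const 1).mul_const (y ^ 2)).sub_const 1
  have hn : HasDerivAt (fun b : ℝ => (i:ℝ) + (b ^ 2 * y ^ 2 - 1) / i)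
      (((2 * a ^ 1) * y ^ 2) / i) a := by
    simpa using ((((hasDerivAt_pow 2 a).mul_const (y ^ 2)).sub_const 1).div_const (i:ℝ)).const_add (i:ℝ)
  have hA : HasDerivAt (fun b => hthr i b y)
      (((2 * 1 * y * s) * ((a ^ 2 + 1) * y ^ 2 - 1) - (2 * a * y * s) * ((2 * a ^ 1) * y ^ 2)) /
          ((a ^ 2 + 1) * y ^ 2 - 1) ^ 2 * ((i:ℝ) + (a ^ 2 * y ^ 2 - 1) / i)
        + (2 * a * y * s / ((a ^ 2 + 1) * y ^ 2 - 1)) * (((2 * a ^ 1) * y ^ 2) / i)) a := by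
    exact (hu.div hv hD.ne').mul hn
  have hEa := hHa.unique hA
  -- derivative in y
  have hq : HasDerivAt (fun z : ℝ => 1 - z ^ 2) (-(2 * y ^ 1)) y := by
    simpa using (hasDerivAt_pow 2 y).const_sub 1
  have hsq : HasDerivAt (fun z : ℝ => Real.sqrt (1 - z ^ 2))
      (1 / (2 * s) * (-(2 * y ^ 1))) y :=
    (Real.hasDerivAt_sqrt h1y2.ne').comp y hq
  have hu' : HasDerivAt (fun z : ℝ => 2 * a * z * Real.sqrt (1 - z ^ 2))
      ((2 * a * 1) * s + (2 * a * y) * (1 / (2 * s) * (-(2 * y ^ 1)))) y := by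
    have h1 : HasDerivAt (fun z : ℝ => 2 * a * z) (2 * a * 1) y := by
      simpa [mul_assoc] using (hasDerivAt_id' (x := y)).const_mul (2 * a)
    exact h1.mul hsq
  have hv' : HasDerivAt (fun z : ℝ => (a ^ 2 + 1) * z ^ 2 - 1)
      ((a ^ 2 + 1) * (2 * y ^ 1)) y := by
    simpa using (((hasDerivAt_pow 2 y).const_mul (a ^ 2 + 1)).sub_const 1)
  have hn' : HasDerivAt (fun z : ℝ => (i:ℝ) + (a ^ 2 * z ^ 2 - 1) / i)
      ((a ^ 2 * (2 * y ^ 1)) / i) y := by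
    simpa using ((((hasDerivAt_pow 2 y).const_mul (a ^ 2)).sub_const 1).div_const (i:ℝ)).const_add (i:ℝ)
  have hB : HasDerivAt (fun z => hthr i a z)
      ((((2 * a * 1) * s + (2 * a * y) * (1 / (2 * s) * (-(2 * y ^ 1)))) * ((a ^ 2 + 1) * y ^ 2 - 1)
          - (2 * a * y * s) * ((a ^ 2 + 1) * (2 * y ^ 1))) / ((a ^ 2 + 1) * y ^ 2 - 1) ^ 2
          * ((i:ℝ) + (a ^ 2 * y ^ 2 - 1) / i)
        + (2 * a * y * s / ((a ^ 2 + 1) * y ^ 2 - 1)) * ((a ^ 2 * (2 * y ^ 1)) / i)) y := by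
    exact (hu'.div hv' hD.ne').mul hn'
  have hEy := hHy.unique hB
  have key : Hy - (a / (y * (1 - y ^ 2))) * Ha =
      -4 * a ^ 3 * y ^ 4 / (i * s * (y ^ 2 + a ^ 2 * y ^ 2 - 1)) := by
    rw [hEa, hEy, show (1:ℝ) - y ^ 2 = s ^ 2 from hs2.symm]
    rw [show y ^ 2 + a ^ 2 * y ^ 2 - 1 = (a ^ 2 + 1) * y ^ 2 - 1 by ring]
    have hDn := hD.ne'
    field_simp
    have h3 : s ^ 3 = (1 - y ^ 2) * s := by
      rw [pow_succ, hs2]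
    have h5 : s ^ 5 = (1 - y ^ 2) ^ 2 * s := by
      rw [show (5:ℕ) = 2*2+1 by rfl, pow_succ, pow_mul, hs2]
    rw [hs2, div_eq_iff (pow_ne_zero 2 (by rw [mul_comm]; exact hDn))]
    field_simp
    ring
  refine ⟨key, ?_⟩
  rw [key]
  apply div_neg_of_neg_of_pos
  · nlinarith
  · positivity
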